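/- Fix m ≥ 1, n ≥ 1, constants M₀ > 0, N₀ᵢ > 0, P_maxᵢ > 0, Z₁ > 0, Z₂ > 0, τ_i > 0, ε_i > 0, c₁ᵢⱼ, c₂ᵢⱼ > 0, q₁ᵢⱼ, q₂ᵢⱼ ≥ 0, P_aᵢ > 0, with M₀/ε_i ≤ P_maxᵢ, q₁ᵢⱼ·sup-bound of the relative price change ≤ Z₁ and q₂ᵢⱼ·(1 + P_maxᵢ/P_aᵢ) ≤ Z₂. Suppose differentiable functions P_i, M_j, N_{ij}, ζ₁ᵢⱼ, ζ₂ᵢⱼ on [0,∞) satisfy the fused-model ODEs with continuous transition rates k_{ij}, k̃_{ij} taking values in [0,1] and with Σ_j k̃_{ij}(t) N_{ij}(t) ≥ ε_i for all t, and suppose the initial state lies in the region Ω defined by: 0 < P_i ≤ P_maxᵢ, M_j ∈ [0, M₀], N_{ij} ∈ [0, N₀ᵢ], Σ_j M_j = M₀, Σ_j N_{ij} = N₀ᵢ, |ζ₁ᵢⱼ| ≤ Z₁, |ζ₂ᵢⱼ| ≤ Z₂, with the conservation laws Σ_j M_j(t) = M₀ and Σ_j N_{ij}(t) = N₀ᵢ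 holding for all t ≥ 0. Then the trajectory remains in Ω for all t ≥ 0; that is, Ω is positively invariant under the flow of the fused model. -/

import Mathlib

set_option maxHeartbeats 2000000

open Set Filter Topology

lemma vec_pos_invariant {ι : Type*} [Fintype ι] {b : ℝ}
    (F F' : ι → ℝ → ℝ)
    (hderiv : ∀ i, ∀ t ∈ Set.Icc (0:ℝ) b, HasDerivAt (F i) (F' i t) t)
    (h0 : ∀ i, 0 < F i 0)
    (hbdry : ∀ t ∈ Set.Icc (0:ℝ) b, (∀ i, 0 ≤ F i t) → ∀ i, F i t = 0 → 0 < F' i t) :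
    ∀ t ∈ Set.Icc (0:ℝ) b, ∀ i, 0 < F i t := by
  by_contra hcon
  push_neg at hcon
  obtain ⟨t₀, ht₀, i₀, hi₀⟩ := hcon
  have hb : (0:ℝ) ≤ b := le_trans ht₀.1 ht₀.2
  set S : Set ℝ := ⋃ i : ι, (Set.Icc (0:ℝ) b ∩ F i ⁻¹' Set.Iic 0) with hS
  have hmemS : ∀ t, t ∈ S ↔ (t ∈ Set.Icc (0:ℝ) b ∧ ∃ i, F i t ≤ 0) := by
    intro t
    simp only [hS, Set.mem_iUnion, Set.mem_inter_iff, Set.mem_preimage, Set.mem_Iic]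
    constructor
    · rintro ⟨i, hi, hFi⟩; exact ⟨hi, i, hFi⟩
    · rintro ⟨hi, i, hFi⟩; exact ⟨i, hi, hFi⟩
  have hScl : IsClosed S := by
    apply isClosed_iUnion_of_finite
    intro i
    have hcont : ContinuousOn (F i) (Set.Icc 0 b) :=
      fun t ht => (hderiv i t ht).continuousAt.continuousWithinAt
    exact hcont.preimage_isClosed_of_isClosed isClosed_Icc isClosed_Iic
  have hSne : S.Nonempty := ⟨t₀, (hmemS t₀).2 ⟨ht₀, i₀, hi₀⟩⟩
  have hSbd : BddBelow S := ⟨0, fun x hx => ((hmemS x).1 hx).1.1⟩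
  set c := sInf S with hc
  have hcS : c ∈ S := hScl.csInf_mem hSne hSbd
  obtain ⟨hcIcc, i₁, hi₁⟩ := (hmemS c).1 hcS
  have hcpos : 0 < c := by
    rcases lt_or_eq_of_le hcIcc.1 with h | h
    · exact h
    · exfalso; rw [← h] at hi₁; exact absurd hi₁ (not_le.mpr (h0 i₁))
  have hlt : ∀ s, 0 ≤ s → s < c → ∀ i, 0 < F i s := by
    intro s hs hsc i
    by_contra hF
    push_neg at hF
    have : s ∈ S := (hmemS s).2 ⟨⟨hs, le_trans hsc.le hcIcc.2⟩, i, hF⟩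
    exact absurd (csInf_le hSbd this) (not_le.mpr hsc)
  have hev : ∀ᶠ s in 𝓝[<] c, 0 ≤ s ∧ s < c := by
    filter_upwards [Ioo_mem_nhdsLT hcpos] with s hs
    exact ⟨hs.1.le, hs.2⟩
  have hnn : ∀ i, 0 ≤ F i c := by
    intro i
    have htend : Tendsto (F i) (𝓝[<] c) (𝓝 (F i c)) :=
      ((hderiv i c hcIcc).continuousAt.tendsto).mono_left nhdsWithin_le_nhds
    refine ge_of_tendsto htend ?_
    filter_upwards [hev] with s hs
    exact (hlt s hs.1 hs.2 i).le
  have hFz : F i₁ c = 0 := le_antisymm hi₁ (hnn i₁)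
  have hd : 0 < F' i₁ c := hbdry c hcIcc hnn i₁ hFz
  have hslope : Tendsto (slope (F i₁) c) (𝓝[≠] c) (𝓝 (F' i₁ c)) :=
    hasDerivAt_iff_tendsto_slope.mp (hderiv i₁ c hcIcc)
  have hslope' : Tendsto (slope (F i₁) c) (𝓝[<] c) (𝓝 (F' i₁ c)) :=
    hslope.mono_left (nhdsWithin_mono c (fun s hs => ne_of_lt hs))
  have hpos : ∀ᶠ s in 𝓝[<] c, 0 < slope (F i₁) c s :=
    hslope'.eventually (eventually_gt_nhds hd)
  have hneg : ∀ᶠ s in 𝓝[<] c, slope (F i₁) c s < 0 := by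
    filter_upwards [hev] with s hs
    have h1 : 0 < F i₁ s := hlt s hs.1 hs.2 i₁
    have h2 : s - c < 0 := sub_neg.mpr hs.2
    rw [slope_def_field]
    have h3 : 0 < F i₁ s - F i₁ c := by rw [hFz]; linarith
    exact div_neg_of_pos_of_neg h3 h2
  obtain ⟨s, h1, h2⟩ := (hpos.and hneg).exists
  linarith


open Finset in
/-- Invariant region (Corollary 2.3): for a solution of the fused asset flow model on
`[0, ∞)` — prices, cash, shares and sentiments evolving by the price, cash, share and
sentiment ODEs with transition rates in `[0,1]`, aggregate selling intensity bounded below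
by `ε_i`, conservation laws holding for all times, `M₀/ε_i ≤ P_maxᵢ`, a uniform bound `G`
on the relative price change with `q₁ᵢⱼ·G ≤ Z₁`, and `q₂ᵢⱼ·(1 + P_maxᵢ/P_aᵢ) ≤ Z₂` —
if the initial state lies in the region `Ω` (positivity, boundedness and conservation
constraints), then the trajectory remains in `Ω` for all `t ≥ 0`. -/
theorem invariant_region
    (m n : ℕ) (hm : 1 ≤ m) (hn : 1 ≤ n)
    (M0 : ℝ) (hM0 : 0 < M0)
    (N0 Pmax : Fin m → ℝ) (hN0 : ∀ i, 0 < N0 i) (hPmax : ∀ i, 0 < Pmax i)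
    (Z1 Z2 : ℝ) (hZ1 : 0 < Z1) (hZ2 : 0 < Z2)
    (τ ε : Fin m → ℝ) (hτ : ∀ i, 0 < τ i) (hε : ∀ i, 0 < ε i)
    (c1 c2 q1 q2 : Fin m → Fin n → ℝ)
    (hc1 : ∀ i j, 0 < c1 i j) (hc2 : ∀ i j, 0 < c2 i j)
    (hq1 : ∀ i j, 0 ≤ q1 i j) (hq2 : ∀ i j, 0 ≤ q2 i j)
    (Pa : Fin m → ℝ) (hPa : ∀ i, 0 < Pa i)
    (hcap : ∀ i, M0 / ε i ≤ Pmax i)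
    (P : Fin m → ℝ → ℝ) (M : Fin n → ℝ → ℝ) (N : Fin m → Fin n → ℝ → ℝ)
    (ζ1 ζ2 : Fin m → Fin n → ℝ → ℝ)
    (k ktil : Fin m → Fin n → ℝ → ℝ)
    (hk_cont : ∀ i j, ContinuousOn (k i j) (Set.Ici (0 : ℝ)))
    (hktil_cont : ∀ i j, ContinuousOn (ktil i j) (Set.Ici (0 : ℝ)))
    (hk : ∀ i j (t : ℝ), 0 ≤ t → 0 ≤ k i j t ∧ k i j t ≤ 1)
    (hktil : ∀ i j (t : ℝ), 0 ≤ t → 0 ≤ ktil i j t ∧ ktil i j t ≤ 1)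
    (hsell : ∀ i (t : ℝ), 0 ≤ t → ε i ≤ ∑ j, ktil i j t * N i j t)
    -- the fused-model ODEs
    (hP_diff : ∀ i (t : ℝ), 0 ≤ t → HasDerivAt (P i)
      (P i t / τ i *
        ((∑ j, k i j t * M j t) / (∑ j, ktil i j t * N i j t * P i t) - 1)) t)
    (hM_diff : ∀ j (t : ℝ), 0 ≤ t → HasDerivAt (M j)
      (-(∑ i, k i j t * M j t) + ∑ i, ktil i j t * N i j t * P i t) t)
    (hN_diff : ∀ i j (t : ℝ), 0 ≤ t → HasDerivAt (N i j)
      (k i j t * M j t / P i t - ktil i j t * N i j t) t)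
    (hζ1_diff : ∀ i j (t : ℝ), 0 ≤ t → HasDerivAt (ζ1 i j)
      (c1 i j * q1 i j *
          ((P i t / τ i *
            ((∑ j', k i j' t * M j' t) / (∑ j', ktil i j' t * N i j' t * P i t) - 1))
            / P i t)
        - c1 i j * ζ1 i j t) t)
    (hζ2_diff : ∀ i j (t : ℝ), 0 ≤ t → HasDerivAt (ζ2 i j)
      (c2 i j * q2 i j * (1 - P i t / Pa i) - c2 i j * ζ2 i j t) t)
    -- uniform bound on the relative price change and the sentiment calibration bounds
    (G : ℝ) (hG : 0 ≤ G)
    (hrel : ∀ i (t : ℝ), 0 ≤ t →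
      |(P i t / τ i *
          ((∑ j, k i j t * M j t) / (∑ j, ktil i j t * N i j t * P i t) - 1)) / P i t| ≤ G)
    (hZ1cal : ∀ i j, q1 i j * G ≤ Z1)
    (hZ2cal : ∀ i j, q2 i j * (1 + Pmax i / Pa i) ≤ Z2)
    -- conservation laws hold for all t ≥ 0
    (hM_cons : ∀ (t : ℝ), 0 ≤ t → ∑ j, M j t = M0)
    (hN_cons : ∀ i (t : ℝ), 0 ≤ t → ∑ j, N i j t = N0 i)
    -- the initial state lies in Ω
    (hP0 : ∀ i, 0 < P i 0 ∧ P i 0 ≤ Pmax i)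
    (hM0' : ∀ j, 0 ≤ M j 0 ∧ M j 0 ≤ M0)
    (hN0' : ∀ i j, 0 ≤ N i j 0 ∧ N i j 0 ≤ N0 i)
    (hζ10 : ∀ i j, |ζ1 i j 0| ≤ Z1)
    (hζ20 : ∀ i j, |ζ2 i j 0| ≤ Z2) :
    -- then the trajectory remains in Ω for all t ≥ 0
    ∀ (t : ℝ), 0 ≤ t →
      (∀ i, 0 < P i t ∧ P i t ≤ Pmax i) ∧
      (∀ j, 0 ≤ M j t ∧ M j t ≤ M0) ∧
      (∀ i j, 0 ≤ N i j t ∧ N i j t ≤ N0 i) ∧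
      (∑ j, M j t = M0) ∧
      (∀ i, ∑ j, N i j t = N0 i) ∧
      (∀ i j, |ζ1 i j t| ≤ Z1) ∧
      (∀ i j, |ζ2 i j t| ≤ Z2) := by
  haveI hmne : Nonempty (Fin m) := ⟨⟨0, hm⟩⟩
  haveI hnne : Nonempty (Fin n) := ⟨⟨0, hn⟩⟩
  -- Step 1: positivity of P and nonnegativity of M, N for all times
  have key : ∀ b : ℝ, 0 ≤ b →
      (∀ i, 0 < P i b) ∧ (∀ j, 0 ≤ M j b) ∧ (∀ i j, 0 ≤ N i j b) := by
    intro b hb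
    set β := (Finset.univ.inf' Finset.univ_nonempty (fun i => P i 0)) / 2 with hβdef
    have hβpos : 0 < β := by
      have h : (0:ℝ) < Finset.univ.inf' Finset.univ_nonempty (fun i => P i 0) := by
        rw [Finset.lt_inf'_iff]
        exact fun i _ => (hP0 i).1
      rw [hβdef]; linarith
    have hβlt : ∀ i, β < P i 0 := by
      intro i
      have h1 : Finset.univ.inf' Finset.univ_nonempty (fun i => P i 0) ≤ P i 0 :=
        Finset.inf'_le _ (Finset.mem_univ i)
      have h : (0:ℝ) < Finset.univ.inf' Finset.univ_nonempty (fun i => P i 0) := by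
        rw [Finset.lt_inf'_iff]
        exact fun i _ => (hP0 i).1
      rw [hβdef]; linarith
    have hPcont : ∀ i, ContinuousOn (P i) (Set.Icc (0:ℝ) b) := fun i s hs =>
      ((hP_diff i s hs.1).continuousAt).continuousWithinAt
    have hCex : ∀ i : Fin m, ∃ Ci : ℝ, ∀ s ∈ Set.Icc (0:ℝ) b, P i s ≤ Ci := by
      intro i
      obtain ⟨x, -, hmax⟩ := isCompact_Icc.exists_isMaxOn ⟨0, ⟨le_refl 0, hb⟩⟩ (hPcont i)
      exact ⟨P i x, fun s hs => hmax hs⟩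
    choose Ci hCi using hCex
    set C := max 1 (Finset.univ.sup' Finset.univ_nonempty Ci) with hCdef
    have hC1 : (1:ℝ) ≤ C := le_max_left _ _
    have hC0 : (0:ℝ) < C := lt_of_lt_of_le one_pos hC1
    have hCb : ∀ i, ∀ s ∈ Set.Icc (0:ℝ) b, P i s ≤ C := fun i s hs =>
      (hCi i s hs).trans (le_trans (Finset.le_sup' Ci (Finset.mem_univ i)) (le_max_right _ _))
    set L := Finset.univ.sup' Finset.univ_nonempty (fun i => 2 / τ i) with hLdef
    have hLi : ∀ i, 2 / τ i ≤ L := by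
      intro i
      rw [hLdef]
      exact Finset.le_sup' (fun i => 2 / τ i) (Finset.mem_univ i)
    have hLpos : 0 < L := by
      obtain ⟨i0⟩ := hmne
      have h1 := hLi i0
      have h2 : 0 < 2 / τ i0 := div_pos two_pos (hτ i0)
      linarith
    set K := 1 + max (((m:ℝ) + n) * C) (Real.exp (L * b) / β) with hKdef
    have hKpos : 0 < K := by
      have h1 : (0:ℝ) ≤ ((m:ℝ) + n) * C := by positivity
      have h2 := le_max_left (((m:ℝ) + n) * C) (Real.exp (L * b) / β)
      rw [hKdef]; linarith
    have hKmC : (m:ℝ) * C < K := by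
      have h1 := le_max_left (((m:ℝ) + n) * C) (Real.exp (L * b) / β)
      have h2 : (0:ℝ) ≤ (n:ℝ) * C := by positivity
      rw [hKdef]; nlinarith
    have hKe : Real.exp (L * b) / β < K := by
      have h1 := le_max_right (((m:ℝ) + n) * C) (Real.exp (L * b) / β)
      rw [hKdef]; linarith
    set εm := Finset.univ.inf' Finset.univ_nonempty ε with hεmdef
    have hεm_le : ∀ i, εm ≤ ε i := by
      intro i
      rw [hεmdef]
      exact Finset.inf'_le _ (Finset.mem_univ i)
    have hεmpos : 0 < εm := by
      rw [hεmdef, Finset.lt_inf'_iff]; exact fun i _ => hε i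
    set η₀ := εm * β * Real.exp (-(K + L) * b) / ((n:ℝ) + 1) with hη₀def
    have hη₀pos : 0 < η₀ := by
      rw [hη₀def]; positivity
    have main : ∀ η : ℝ, 0 < η → η ≤ η₀ → ∀ s ∈ Set.Icc (0:ℝ) b,
        (∀ i, β * Real.exp (-(2 / τ i) * s) < P i s) ∧
        (∀ j, -(η * Real.exp (K * s)) < M j s) ∧
        (∀ i j, -(η * Real.exp (K * s)) < N i j s) := by
      intro η hη hηle
      set F : Fin m ⊕ (Fin n ⊕ Fin m × Fin n) → ℝ → ℝ :=
        Sum.elim (fun i t => P i t - β * Real.exp (-(2 / τ i) * t))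
          (Sum.elim (fun j t => M j t + η * Real.exp (K * t))
            (fun p t => N p.1 p.2 t + η * Real.exp (K * t))) with hFdef
      set F' : Fin m ⊕ (Fin n ⊕ Fin m × Fin n) → ℝ → ℝ :=
        Sum.elim (fun i t => (P i t / τ i *
              ((∑ j, k i j t * M j t) / (∑ j, ktil i j t * N i j t * P i t) - 1))
            + 2 / τ i * (β * Real.exp (-(2 / τ i) * t)))
          (Sum.elim (fun j t => (-(∑ i, k i j t * M j t) + ∑ i, ktil i j t * N i j t * P i t)
              + η * (K * Real.exp (K * t)))
            (fun p t => (k p.1 p.2 t * M p.2 t / P p.1 t - ktil p.1 p.2 t * N p.1 p.2 t)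
              + η * (K * Real.exp (K * t)))) with hF'def
      have hder : ∀ idx, ∀ t ∈ Set.Icc (0:ℝ) b, HasDerivAt (F idx) (F' idx t) t := by
        rintro (i | j | ⟨i, j⟩) t ht
        · simp only [hFdef, hF'def, Sum.elim_inl]
          have h2 : HasDerivAt (fun u : ℝ => β * Real.exp (-(2 / τ i) * u))
              (β * (Real.exp (-(2 / τ i) * t) * (-(2 / τ i) * 1))) t :=
            (((hasDerivAt_id t).const_mul (-(2 / τ i))).exp).const_mul β
          refine ((hP_diff i t ht.1).sub h2).congr_deriv ?_
          ring
        · simp only [hFdef, hF'def, Sum.elim_inr, Sum.elim_inl]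
          have h2 : HasDerivAt (fun u : ℝ => η * Real.exp (K * u))
              (η * (Real.exp (K * t) * (K * 1))) t :=
            (((hasDerivAt_id t).const_mul K).exp).const_mul η
          refine ((hM_diff j t ht.1).add h2).congr_deriv ?_
          ring
        · simp only [hFdef, hF'def, Sum.elim_inr]
          have h2 : HasDerivAt (fun u : ℝ => η * Real.exp (K * u))
              (η * (Real.exp (K * t) * (K * 1))) t :=
            (((hasDerivAt_id t).const_mul K).exp).const_mul η
          refine ((hN_diff i j t ht.1).add h2).congr_deriv ?_
          ring
      have h0 : ∀ idx, 0 < F idx 0 := by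
        rintro (i | j | ⟨i, j⟩) <;>
          simp only [hFdef, Sum.elim_inl, Sum.elim_inr, mul_zero, Real.exp_zero, mul_one]
        · linarith [hβlt i]
        · linarith [(hM0' j).1]
        · linarith [(hN0' i j).1]
      have hbd : ∀ t ∈ Set.Icc (0:ℝ) b, (∀ idx, 0 ≤ F idx t) →
          ∀ idx, F idx t = 0 → 0 < F' idx t := by
        intro t ht hall
        have ht0 : (0:ℝ) ≤ t := ht.1
        have htb : t ≤ b := ht.2
        have he2pos : 0 < Real.exp (K * t) := Real.exp_pos _
        have hPlow : ∀ i, β * Real.exp (-(2 / τ i) * t) ≤ P i t := by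
          intro i
          have h := hall (Sum.inl i)
          simp only [hFdef, Sum.elim_inl] at h
          linarith
        have hPpos : ∀ i, 0 < P i t := fun i =>
          lt_of_lt_of_le (mul_pos hβpos (Real.exp_pos _)) (hPlow i)
        have hMlow : ∀ j, -(η * Real.exp (K * t)) ≤ M j t := by
          intro j
          have h := hall (Sum.inr (Sum.inl j))
          simp only [hFdef, Sum.elim_inr, Sum.elim_inl] at h
          linarith
        have hNlow : ∀ i j, -(η * Real.exp (K * t)) ≤ N i j t := by
          intro i j
          have h := hall (Sum.inr (Sum.inr (i, j)))
          simp only [hFdef, Sum.elim_inr] at h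
          linarith
        have hkM : ∀ i j, -(η * Real.exp (K * t)) ≤ k i j t * M j t := by
          intro i j
          rcases le_or_gt 0 (M j t) with h | h
          · have h1 := mul_nonneg (hk i j t ht0).1 h
            nlinarith [mul_pos hη he2pos]
          · have h1 := (hk i j t ht0).2
            have h2 := (hk i j t ht0).1
            nlinarith [hMlow j, mul_nonneg (sub_nonneg.mpr h1) (le_of_lt (neg_pos.mpr h))]
        have hexp1 : ∀ i, Real.exp (-(L * b)) ≤ Real.exp (-(2 / τ i) * t) := by
          intro i
          apply Real.exp_le_exp.mpr
          have h1 := hLi i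
          have h2 : 0 < 2 / τ i := div_pos two_pos (hτ i)
          nlinarith [mul_le_mul_of_nonneg_right h1 ht0, mul_le_mul_of_nonneg_left htb hLpos.le]
        have hexp2 : Real.exp (-(K + L) * b) * Real.exp (K * t) ≤ Real.exp (-(L * b)) := by
          rw [← Real.exp_add]
          apply Real.exp_le_exp.mpr
          nlinarith [mul_nonneg hKpos.le (sub_nonneg.mpr htb)]
        have hkeyP : ∀ i, (n:ℝ) * (η * Real.exp (K * t)) < ε i * (β * Real.exp (-(2 / τ i) * t)) := by
          intro i
          have hn1 : (0:ℝ) < (n:ℝ) + 1 := by positivity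
          rw [hη₀def] at hηle
          have h1 : η * ((n:ℝ) + 1) ≤ εm * β * Real.exp (-(K + L) * b) := (le_div_iff₀ hn1).mp hηle
          have h2 : (n:ℝ) * (η * Real.exp (K * t)) < ((n:ℝ) + 1) * η * Real.exp (K * t) := by
            nlinarith [mul_pos hη he2pos]
          have h3 : ((n:ℝ) + 1) * η * Real.exp (K * t)
              ≤ εm * β * (Real.exp (-(K + L) * b) * Real.exp (K * t)) := by
            nlinarith [mul_le_mul_of_nonneg_right h1 he2pos.le]
          have h4 : εm * β * (Real.exp (-(K + L) * b) * Real.exp (K * t))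
              ≤ εm * β * Real.exp (-(L * b)) := by
            nlinarith [mul_le_mul_of_nonneg_left hexp2 (mul_pos hεmpos hβpos).le]
          have h5 : εm * β * Real.exp (-(L * b)) ≤ ε i * (β * Real.exp (-(2 / τ i) * t)) := by
            nlinarith [mul_le_mul_of_nonneg_left
              (mul_le_mul (hεm_le i) (hexp1 i) (Real.exp_pos _).le (hε i).le) hβpos.le]
          linarith
        intro idx hzero
        rcases idx with i | j | ⟨i, j⟩
        · -- price boundary
          simp only [hFdef, Sum.elim_inl] at hzero
          simp only [hF'def, Sum.elim_inl]
          have hPt : P i t = β * Real.exp (-(2 / τ i) * t) := by linarith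
          have hτi := hτ i
          set X := ∑ j, k i j t * M j t with hXdef
          set Si := ∑ j, ktil i j t * N i j t with hSidef
          have hSi : ε i ≤ Si := hsell i t ht0
          have hSipos : 0 < Si := lt_of_lt_of_le (hε i) hSi
          have hprod : ∑ j, ktil i j t * N i j t * P i t = Si * P i t := by
            rw [hSidef, ← Finset.sum_mul]
          rw [hprod]
          have hE : P i t / τ i * (X / (Si * P i t) - 1) = X / (τ i * Si) - P i t / τ i := by
            field_simp [(hPpos i).ne', hSipos.ne', hτi.ne']
          rw [hE, hPt]
          have hXlow : -((n:ℝ) * (η * Real.exp (K * t))) ≤ X := by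
            have h := Finset.sum_le_sum (fun j (_ : j ∈ Finset.univ) => hkM i j)
            rw [Finset.sum_const, Finset.card_univ, Fintype.card_fin, nsmul_eq_mul] at h
            ring_nf at h ⊢
            linarith
          have hXSi : -((n:ℝ) * (η * Real.exp (K * t))) / ε i ≤ X / Si := by
            have hA : (0:ℝ) ≤ (n:ℝ) * (η * Real.exp (K * t)) := by positivity
            rcases le_or_gt 0 X with hX | hX
            · have h1 : 0 ≤ X / Si := div_nonneg hX hSipos.le
              have h2 : -((n:ℝ) * (η * Real.exp (K * t))) / ε i ≤ 0 :=
                div_nonpos_of_nonpos_of_nonneg (by linarith) (hε i).le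
              linarith
            · rw [div_le_div_iff₀ (hε i) hSipos]
              nlinarith [mul_le_mul_of_nonneg_left hSi hA,
                mul_le_mul_of_nonneg_right hXlow (hε i).le]
          have hfin : -(β * Real.exp (-(2 / τ i) * t)) < X / Si := by
            have h1 : -(β * Real.exp (-(2 / τ i) * t))
                < -((n:ℝ) * (η * Real.exp (K * t))) / ε i := by
              rw [lt_div_iff₀ (hε i)]
              nlinarith [hkeyP i]
            linarith
          rw [mul_comm (τ i) Si, ← div_div]
          have heq : X / Si / τ i - β * Real.exp (-(2 / τ i) * t) / τ i
              + 2 / τ i * (β * Real.exp (-(2 / τ i) * t))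
              = (X / Si + β * Real.exp (-(2 / τ i) * t)) * (1 / τ i) := by
            ring
          rw [heq]
          have h2 : 0 < X / Si + β * Real.exp (-(2 / τ i) * t) := by linarith
          have h3 : 0 < 1 / τ i := by positivity
          exact mul_pos h2 h3
        · -- cash boundary
          simp only [hFdef, Sum.elim_inr, Sum.elim_inl] at hzero
          simp only [hF'def, Sum.elim_inr, Sum.elim_inl]
          have hMt : M j t = -(η * Real.exp (K * t)) := by linarith
          have h1 : 0 ≤ -(∑ i, k i j t * M j t) := by
            rw [neg_nonneg]
            apply Finset.sum_nonpos
            intro i _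
            rw [hMt]
            have hk0 := (hk i j t ht0).1
            nlinarith [mul_pos hη he2pos]
          have h2 : ∀ i : Fin m, -(η * Real.exp (K * t) * C) ≤ ktil i j t * N i j t * P i t := by
            intro i
            have hkt0 := (hktil i j t ht0).1
            have hkt1 := (hktil i j t ht0).2
            have hPp := hPpos i
            have hPC := hCb i t ht
            rcases le_or_gt 0 (N i j t) with h | h
            · have hnn : 0 ≤ ktil i j t * N i j t * P i t :=
                mul_nonneg (mul_nonneg hkt0 h) hPp.le
              nlinarith [mul_pos (mul_pos hη he2pos) hC0]
            · have ha : -(η * Real.exp (K * t)) ≤ ktil i j t * N i j t := by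
                nlinarith [hNlow i j, mul_nonneg (sub_nonneg.mpr hkt1) (le_of_lt (neg_pos.mpr h))]
              have hb : ktil i j t * N i j t ≤ 0 :=
                mul_nonpos_of_nonneg_of_nonpos hkt0 h.le
              nlinarith [mul_le_mul_of_nonpos_left hPC hb,
                mul_le_mul_of_nonneg_right ha hC0.le]
          have h3 : -((m:ℝ) * (η * Real.exp (K * t) * C)) ≤ ∑ i, ktil i j t * N i j t * P i t := by
            have h := Finset.sum_le_sum (fun i (_ : i ∈ Finset.univ) => h2 i)
            rw [Finset.sum_const, Finset.card_univ, Fintype.card_fin, nsmul_eq_mul] at h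
            ring_nf at h ⊢
            linarith
          nlinarith [mul_pos (sub_pos.mpr hKmC) (mul_pos hη he2pos)]
        · -- share boundary
          simp only [hFdef, Sum.elim_inr] at hzero
          simp only [hF'def, Sum.elim_inr]
          have hNt : N i j t = -(η * Real.exp (K * t)) := by linarith
          have hkt0 := (hktil i j t ht0).1
          have h1 : 0 ≤ -(ktil i j t * N i j t) := by
            rw [hNt]
            nlinarith [mul_nonneg hkt0 (mul_pos hη he2pos).le]
          have hp0pos : 0 < β * Real.exp (-(L * b)) := mul_pos hβpos (Real.exp_pos _)
          have hPge : β * Real.exp (-(L * b)) ≤ P i t :=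
            le_trans (by nlinarith [hexp1 i] : β * Real.exp (-(L * b)) ≤ β * Real.exp (-(2 / τ i) * t)) (hPlow i)
          have h2 : -(η * Real.exp (K * t)) / (β * Real.exp (-(L * b))) ≤ k i j t * M j t / P i t := by
            rcases le_or_gt 0 (k i j t * M j t) with h | h
            · have ha : 0 ≤ k i j t * M j t / P i t := div_nonneg h (hPpos i).le
              have hb : -(η * Real.exp (K * t)) / (β * Real.exp (-(L * b))) ≤ 0 :=
                div_nonpos_of_nonpos_of_nonneg (by nlinarith [mul_pos hη he2pos]) hp0pos.le
              linarith
            · rw [div_le_div_iff₀ hp0pos (hPpos i)]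
              nlinarith [mul_le_mul_of_nonneg_left hPge (mul_pos hη he2pos).le,
                mul_nonneg hp0pos.le (by linarith [hkM i j] : (0:ℝ) ≤ k i j t * M j t + η * Real.exp (K * t))]
          have h3 : η * Real.exp (K * t) / (β * Real.exp (-(L * b))) < η * (K * Real.exp (K * t)) := by
            rw [div_lt_iff₀ hp0pos]
            have hKp : 1 < K * (β * Real.exp (-(L * b))) := by
              have hKe' : Real.exp (L * b) < K * β := by
                have := hKe
                rw [div_lt_iff₀ hβpos] at this
                exact this
              have hmul := mul_lt_mul_of_pos_right hKe' (Real.exp_pos (-(L * b)))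
              rw [← Real.exp_add] at hmul
              simp only [add_neg_cancel, Real.exp_zero] at hmul
              nlinarith [hmul]
            nlinarith [mul_pos (mul_pos hη he2pos) (sub_pos.mpr hKp)]
          have h4 : -(η * Real.exp (K * t)) / (β * Real.exp (-(L * b)))
              = -(η * Real.exp (K * t) / (β * Real.exp (-(L * b)))) := neg_div _ _
          linarith [h1, h2, h3]
      intro s hs
      have hinv := vec_pos_invariant F F' hder h0 hbd s hs
      refine ⟨fun i => ?_, fun j => ?_, fun i j => ?_⟩
      · have h := hinv (Sum.inl i)
        simp only [hFdef, Sum.elim_inl] at h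
        linarith
      · have h := hinv (Sum.inr (Sum.inl j))
        simp only [hFdef, Sum.elim_inr, Sum.elim_inl] at h
        linarith
      · have h := hinv (Sum.inr (Sum.inr (i, j)))
        simp only [hFdef, Sum.elim_inr] at h
        linarith
    have hbIcc : b ∈ Set.Icc (0:ℝ) b := ⟨hb, le_rfl⟩
    refine ⟨fun i => ?_, fun j => ?_, fun i j => ?_⟩
    · have h := (main η₀ hη₀pos le_rfl b hbIcc).1 i
      have h2 : 0 < β * Real.exp (-(2 / τ i) * b) := mul_pos hβpos (Real.exp_pos _)
      linarith
    · by_contra hcon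
      push_neg at hcon
      have hηpos : 0 < min η₀ (-M j b * Real.exp (-(K * b))) :=
        lt_min hη₀pos (mul_pos (neg_pos.mpr hcon) (Real.exp_pos _))
      have h := (main _ hηpos (min_le_left _ _) b hbIcc).2.1 j
      have hη2 : min η₀ (-M j b * Real.exp (-(K * b))) ≤ -M j b * Real.exp (-(K * b)) :=
        min_le_right _ _
      have hexp : Real.exp (-(K * b)) * Real.exp (K * b) = 1 := by
        rw [← Real.exp_add]; simp
      nlinarith [mul_le_mul_of_nonneg_right hη2 (Real.exp_pos (K * b)).le, hexp,
        Real.exp_pos (K * b)]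
    · by_contra hcon
      push_neg at hcon
      have hηpos : 0 < min η₀ (-N i j b * Real.exp (-(K * b))) :=
        lt_min hη₀pos (mul_pos (neg_pos.mpr hcon) (Real.exp_pos _))
      have h := (main _ hηpos (min_le_left _ _) b hbIcc).2.2 i j
      have hη2 : min η₀ (-N i j b * Real.exp (-(K * b))) ≤ -N i j b * Real.exp (-(K * b)) :=
        min_le_right _ _
      have hexp : Real.exp (-(K * b)) * Real.exp (K * b) = 1 := by
        rw [← Real.exp_add]; simp
      nlinarith [mul_le_mul_of_nonneg_right hη2 (Real.exp_pos (K * b)).le, hexp,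
        Real.exp_pos (K * b)]
  have hPposG : ∀ (t : ℝ), 0 ≤ t → ∀ i, 0 < P i t := fun t ht => (key t ht).1
  have hMnn : ∀ (t : ℝ), 0 ≤ t → ∀ j, 0 ≤ M j t := fun t ht => (key t ht).2.1
  have hNnn : ∀ (t : ℝ), 0 ≤ t → ∀ i j, 0 ≤ N i j t := fun t ht => (key t ht).2.2
  have hMub : ∀ (t : ℝ), 0 ≤ t → ∀ j, M j t ≤ M0 := by
    intro t ht j
    have h := Finset.single_le_sum (f := fun j' => M j' t)
      (fun j' _ => hMnn t ht j') (Finset.mem_univ j)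
    rw [hM_cons t ht] at h
    exact h
  have hNub : ∀ (t : ℝ), 0 ≤ t → ∀ i j, N i j t ≤ N0 i := by
    intro t ht i j
    have h := Finset.single_le_sum (f := fun j' => N i j' t)
      (fun j' _ => hNnn t ht i j') (Finset.mem_univ j)
    rw [hN_cons i t ht] at h
    exact h
  have hPub : ∀ (t : ℝ), 0 ≤ t → ∀ i, P i t ≤ Pmax i := by
    intro t ht i
    have hτi := hτ i
    have hgd : ∀ u : ℝ, 0 ≤ u → HasDerivAt (fun u => (P i u - Pmax i) * Real.exp (u / τ i))
        ((P i u / τ i * ((∑ j, k i j u * M j u) / (∑ j, ktil i j u * N i j u * P i u) - 1))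
           * Real.exp (u / τ i)
         + (P i u - Pmax i) * (Real.exp (u / τ i) * (1 / τ i))) u := by
      intro u hu
      exact ((hP_diff i u hu).sub_const (Pmax i)).mul (((hasDerivAt_id u).div_const (τ i)).exp)
    have hanti : AntitoneOn (fun u => (P i u - Pmax i) * Real.exp (u / τ i)) (Set.Ici (0:ℝ)) := by
      apply antitoneOn_of_deriv_nonpos (convex_Ici 0)
      · intro u hu
        exact (hgd u hu).continuousAt.continuousWithinAt
      · intro u hu
        rw [interior_Ici] at hu
        exact (hgd u hu.le).differentiableAt.differentiableWithinAt
      · intro u hu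
        rw [interior_Ici] at hu
        have hu0 : (0:ℝ) ≤ u := hu.le
        rw [(hgd u hu0).deriv]
        set X := ∑ j, k i j u * M j u with hXdef
        set S := ∑ j, ktil i j u * N i j u with hSdef
        have hS : ε i ≤ S := hsell i u hu0
        have hSpos : 0 < S := lt_of_lt_of_le (hε i) hS
        have hPp := hPposG u hu0 i
        have hprod : ∑ j, ktil i j u * N i j u * P i u = S * P i u := by
          rw [hSdef, ← Finset.sum_mul]
        rw [hprod]
        have hE : P i u / τ i * (X / (S * P i u) - 1) = X / S / τ i - P i u / τ i := by
          field_simp [hPp.ne', hSpos.ne', hτi.ne']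
        rw [hE]
        have hX0 : 0 ≤ X := Finset.sum_nonneg fun j _ => mul_nonneg (hk i j u hu0).1 (hMnn u hu0 j)
        have hXM : X ≤ M0 := by
          have h1 : X ≤ ∑ j, M j u := by
            apply Finset.sum_le_sum
            intro j _
            nlinarith [mul_nonneg (sub_nonneg.mpr (hk i j u hu0).2) (hMnn u hu0 j)]
          rw [hM_cons u hu0] at h1
          exact h1
        have hXS : X / S ≤ Pmax i := by
          have h1 : X / S ≤ X / ε i := by
            rw [div_le_div_iff₀ hSpos (hε i)]
            exact mul_le_mul_of_nonneg_left hS hX0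
          have h2 : X / ε i ≤ M0 / ε i := by
            rw [div_le_div_iff₀ (hε i) (hε i)]
            nlinarith [mul_nonneg (sub_nonneg.mpr hXM) (hε i).le]
          linarith [hcap i]
        have heq : (X / S / τ i - P i u / τ i) * Real.exp (u / τ i)
            + (P i u - Pmax i) * (Real.exp (u / τ i) * (1 / τ i))
            = (X / S - Pmax i) * Real.exp (u / τ i) * (1 / τ i) := by ring
        rw [heq]
        have h4 : X / S - Pmax i ≤ 0 := by linarith
        have h5 : (0:ℝ) ≤ 1 / τ i := by positivity
        exact mul_nonpos_of_nonpos_of_nonneg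
          (mul_nonpos_of_nonpos_of_nonneg h4 (Real.exp_pos _).le) h5
    have hg : (P i t - Pmax i) * Real.exp (t / τ i) ≤ (P i 0 - Pmax i) * Real.exp ((0:ℝ) / τ i) :=
      hanti Set.self_mem_Ici (Set.mem_Ici.mpr ht) ht
    have hg0 : (P i 0 - Pmax i) * Real.exp ((0:ℝ) / τ i) ≤ 0 :=
      mul_nonpos_of_nonpos_of_nonneg (by linarith [(hP0 i).2]) (Real.exp_pos _).le
    nlinarith [Real.exp_pos (t / τ i), hg, hg0]
  have hζ1b : ∀ (t : ℝ), 0 ≤ t → ∀ i j, |ζ1 i j t| ≤ Z1 := by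
    intro t ht i j
    have hc := hc1 i j
    have hq := hq1 i j
    have hσ : ∀ σ : ℝ, σ = 1 ∨ σ = -1 → 0 ≤ Z1 + σ * ζ1 i j t := by
      intro σ hσ1
      have hσabs : ∀ x : ℝ, |σ * x| = |x| := by
        intro x; rcases hσ1 with h | h <;> rw [h] <;> simp
      have hfd : ∀ u : ℝ, 0 ≤ u →
          HasDerivAt (fun u => (Z1 + σ * ζ1 i j u) * Real.exp (c1 i j * u))
          ((σ * (c1 i j * q1 i j *
              ((P i u / τ i *
                ((∑ j', k i j' u * M j' u) / (∑ j', ktil i j' u * N i j' u * P i u) - 1))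
                / P i u)
            - c1 i j * ζ1 i j u)) * Real.exp (c1 i j * u)
           + (Z1 + σ * ζ1 i j u) * (Real.exp (c1 i j * u) * (c1 i j * 1))) u := by
        intro u hu
        exact (((hζ1_diff i j u hu).const_mul σ).const_add Z1).mul
          (((hasDerivAt_id u).const_mul (c1 i j)).exp)
      have hmono : MonotoneOn (fun u => (Z1 + σ * ζ1 i j u) * Real.exp (c1 i j * u))
          (Set.Ici (0:ℝ)) := by
        apply monotoneOn_of_deriv_nonneg (convex_Ici 0)
        · intro u hu; exact (hfd u hu).continuousAt.continuousWithinAt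
        · intro u hu; rw [interior_Ici] at hu
          exact (hfd u hu.le).differentiableAt.differentiableWithinAt
        · intro u hu
          rw [interior_Ici] at hu
          have hu0 : (0:ℝ) ≤ u := hu.le
          rw [(hfd u hu0).deriv]
          set R := (P i u / τ i *
              ((∑ j', k i j' u * M j' u) / (∑ j', ktil i j' u * N i j' u * P i u) - 1))
              / P i u with hRdef
          have hR : |R| ≤ G := hrel i u hu0
          have hqR : |q1 i j * R| ≤ Z1 := by
            rw [abs_mul, abs_of_nonneg hq]
            nlinarith [mul_le_mul_of_nonneg_left hR hq, hZ1cal i j, abs_nonneg R]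
          have hσqR : -Z1 ≤ σ * (q1 i j * R) := by
            have h : |σ * (q1 i j * R)| ≤ Z1 := by rw [hσabs]; exact hqR
            exact (abs_le.mp h).1
          have heq : (σ * (c1 i j * q1 i j * R - c1 i j * ζ1 i j u)) * Real.exp (c1 i j * u)
              + (Z1 + σ * ζ1 i j u) * (Real.exp (c1 i j * u) * (c1 i j * 1))
              = c1 i j * (Z1 + σ * (q1 i j * R)) * Real.exp (c1 i j * u) := by ring
          rw [heq]
          exact mul_nonneg (mul_nonneg hc.le (by linarith)) (Real.exp_pos _).le
      have hmt : (Z1 + σ * ζ1 i j 0) * Real.exp (c1 i j * 0)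
          ≤ (Z1 + σ * ζ1 i j t) * Real.exp (c1 i j * t) :=
        hmono Set.self_mem_Ici (Set.mem_Ici.mpr ht) ht
      rw [mul_zero, Real.exp_zero, mul_one] at hmt
      have h0' : 0 ≤ Z1 + σ * ζ1 i j 0 := by
        have h := abs_le.mp (hζ10 i j)
        rcases hσ1 with h' | h' <;> rw [h'] <;> linarith
      nlinarith [hmt, h0', Real.exp_pos (c1 i j * t)]
    have hp := hσ 1 (Or.inl rfl)
    have hmm := hσ (-1) (Or.inr rfl)
    rw [abs_le]
    constructor <;> nlinarith [hp, hmm]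
  have hζ2b : ∀ (t : ℝ), 0 ≤ t → ∀ i j, |ζ2 i j t| ≤ Z2 := by
    intro t ht i j
    have hc := hc2 i j
    have hq := hq2 i j
    have hσ : ∀ σ : ℝ, σ = 1 ∨ σ = -1 → 0 ≤ Z2 + σ * ζ2 i j t := by
      intro σ hσ1
      have hfd : ∀ u : ℝ, 0 ≤ u →
          HasDerivAt (fun u => (Z2 + σ * ζ2 i j u) * Real.exp (c2 i j * u))
          ((σ * (c2 i j * q2 i j * (1 - P i u / Pa i) - c2 i j * ζ2 i j u)) * Real.exp (c2 i j * u)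
           + (Z2 + σ * ζ2 i j u) * (Real.exp (c2 i j * u) * (c2 i j * 1))) u := by
        intro u hu
        exact (((hζ2_diff i j u hu).const_mul σ).const_add Z2).mul
          (((hasDerivAt_id u).const_mul (c2 i j)).exp)
      have hmono : MonotoneOn (fun u => (Z2 + σ * ζ2 i j u) * Real.exp (c2 i j * u))
          (Set.Ici (0:ℝ)) := by
        apply monotoneOn_of_deriv_nonneg (convex_Ici 0)
        · intro u hu; exact (hfd u hu).continuousAt.continuousWithinAt
        · intro u hu; rw [interior_Ici] at hu
          exact (hfd u hu.le).differentiableAt.differentiableWithinAt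
        · intro u hu
          rw [interior_Ici] at hu
          have hu0 : (0:ℝ) ≤ u := hu.le
          rw [(hfd u hu0).deriv]
          have hPu := hPposG u hu0 i
          have hPM := hPub u hu0 i
          have hPai := hPa i
          have hdiv1 : 0 < P i u / Pa i := div_pos hPu hPai
          have hdiv2 : P i u / Pa i ≤ Pmax i / Pa i := by
            rw [div_le_div_iff₀ hPai hPai]
            nlinarith [mul_nonneg (sub_nonneg.mpr hPM) hPai.le]
          have hdiv3 : 0 < Pmax i / Pa i := div_pos (hPmax i) hPai
          have hb1 : -Z2 ≤ σ * (q2 i j * (1 - P i u / Pa i)) := by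
            have hcal := hZ2cal i j
            rcases hσ1 with h' | h' <;> rw [h'] <;>
              nlinarith [mul_le_mul_of_nonneg_left hdiv2 hq,
                mul_nonneg hq hdiv1.le, mul_nonneg hq hdiv3.le]
          have heq : (σ * (c2 i j * q2 i j * (1 - P i u / Pa i) - c2 i j * ζ2 i j u))
                * Real.exp (c2 i j * u)
              + (Z2 + σ * ζ2 i j u) * (Real.exp (c2 i j * u) * (c2 i j * 1))
              = c2 i j * (Z2 + σ * (q2 i j * (1 - P i u / Pa i))) * Real.exp (c2 i j * u) := by
            ring
          rw [heq]
          exact mul_nonneg (mul_nonneg hc.le (by linarith)) (Real.exp_pos _).le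
      have hmt : (Z2 + σ * ζ2 i j 0) * Real.exp (c2 i j * 0)
          ≤ (Z2 + σ * ζ2 i j t) * Real.exp (c2 i j * t) :=
        hmono Set.self_mem_Ici (Set.mem_Ici.mpr ht) ht
      rw [mul_zero, Real.exp_zero, mul_one] at hmt
      have h0' : 0 ≤ Z2 + σ * ζ2 i j 0 := by
        have h := abs_le.mp (hζ20 i j)
        rcases hσ1 with h' | h' <;> rw [h'] <;> linarith
      nlinarith [hmt, h0', Real.exp_pos (c2 i j * t)]
    have hp := hσ 1 (Or.inl rfl)
    have hmm := hσ (-1) (Or.inr rfl)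
    rw [abs_le]
    constructor <;> nlinarith [hp, hmm]
  intro t ht
  exact ⟨fun i => ⟨hPposG t ht i, hPub t ht i⟩,
    fun j => ⟨hMnn t ht j, hMub t ht j⟩,
    fun i j => ⟨hNnn t ht i j, hNub t ht i j⟩,
    hM_cons t ht, fun i => hN_cons i t ht,
    fun i j => hζ1b t ht i j, fun i j => hζ2b t ht i j⟩
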